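/- In the number field K = ℚ(√−2, √−6), −1 is a sum of 3 fourth powers: there exist x, y, z ∈ K with x⁴ + y⁴ + z⁴ = −1. -/

import Mathlib

/-- In the number field `K = ℚ(√-2, √-6)` (viewed inside `ℂ`, with
`√-2 = i√2` and `√-6 = i√6`), `-1` is a sum of 3 fourth powers. -/
theorem stmt_9 :
    ∃ x y z : ℂ,
      x ∈ Subfield.closure {Complex.I * (Real.sqrt 2 : ℂ), Complex.I * (Real.sqrt 6 : ℂ)} ∧
      y ∈ Subfield.closure {Complex.I * (Real.sqrt 2 : ℂ), Complex.I * (Real.sqrt 6 : ℂ)} ∧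
      z ∈ Subfield.closure {Complex.I * (Real.sqrt 2 : ℂ), Complex.I * (Real.sqrt 6 : ℂ)} ∧
      x ^ 4 + y ^ 4 + z ^ 4 = -1 := by
  set a : ℂ := Complex.I * (Real.sqrt 2 : ℂ) with ha_def
  set b : ℂ := Complex.I * (Real.sqrt 6 : ℂ) with hb_def
  have ha2 : a ^ 2 = -2 := by
    rw [ha_def, mul_pow, Complex.I_sq]
    norm_cast
    rw [Real.sq_sqrt (by norm_num : (2:ℝ) ≥ 0)]
    norm_num
  have hb2 : b ^ 2 = -6 := by
    rw [hb_def, mul_pow, Complex.I_sq]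
    norm_cast
    rw [Real.sq_sqrt (by norm_num : (6:ℝ) ≥ 0)]
    norm_num
  clear_value a b
  clear ha_def hb_def
  have hane : a + 1 ≠ 0 := by
    intro h
    have : a = -1 := by linear_combination h
    rw [this] at ha2
    norm_num at ha2
  set S := Subfield.closure {a, b} with hS
  have haS : a ∈ S := Subfield.subset_closure (by simp)
  have hbS : b ∈ S := Subfield.subset_closure (by simp)
  have h2S : (2 : ℂ) ∈ S := by
    have := S.add_mem S.one_mem S.one_mem
    norm_num at this
    norm_num
  have h0 : ((a+b)/2)^4 + ((a-b)/2)^4 + (a+1)^4 + (a-1)^4 = 0 := by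
    linear_combination (17*a^2/8 + 13/4) * ha2 + (b^2/8 + (3*a^2-3)/4) * hb2
  refine ⟨(a + b) / (2 * (a + 1)), (a - b) / (2 * (a + 1)), (a - 1) / (a + 1), ?_, ?_, ?_, ?_⟩
  · exact S.div_mem (S.add_mem haS hbS) (S.mul_mem h2S (S.add_mem haS S.one_mem))
  · exact S.div_mem (S.sub_mem haS hbS) (S.mul_mem h2S (S.add_mem haS S.one_mem))
  · exact S.div_mem (S.sub_mem haS S.one_mem) (S.add_mem haS S.one_mem)
  · have h4 : ((a+1):ℂ)^4 ≠ 0 := pow_ne_zero _ hane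
    have key : ((a+b)/(2*(a+1)))^4 + ((a-b)/(2*(a+1)))^4 + ((a-1)/(a+1))^4 + 1
        = (((a+b)/2)^4 + ((a-b)/2)^4 + (a+1)^4 + (a-1)^4) / (a+1)^4 := by
      field_simp
      ring
    have := key.trans (by rw [h0, zero_div])
    linear_combination this
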